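/- Relaxation of the betting inverses by the kl inverses. For every integer T ≥ 1, every z ∈ [0,1]^T and every C ≥ 0, one has Ψ_+^{-1}(z, C/T) ≤ kl_+^{-1}(μ_z, C/T) and Ψ_-^{-1}(z, C/T) ≥ kl_-^{-1}(μ_z, C/T). -/

import Mathlib

open MeasureTheory Set

/-- Extended-real logarithm: `log ⊤ = ⊤`, `log x = -∞` for `x ≤ 0` (in particular `log 0 = -∞`). -/
noncomputable def elog (x : EReal) : EReal :=
  if x = ⊤ then ⊤ else if x ≤ 0 then ⊥ else ((Real.log x.toReal : ℝ) : EReal)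

/-- Lower endpoint `-1/(1-μ)` of the betting interval, with the convention `1/0 = +∞`. -/
noncomputable def betLower (μ : ℝ) : EReal := if μ = 1 then ⊥ else ((-(1 - μ)⁻¹ : ℝ) : EReal)

/-- Upper endpoint `1/μ` of the betting interval, with the convention `1/0 = +∞`. -/
noncomputable def betUpper (μ : ℝ) : EReal := if μ = 0 then ⊤ else ((μ⁻¹ : ℝ) : EReal)

/-- The betting interval `A_μ = [-1/(1-μ), 1/μ]` (as a set of extended reals). -/
noncomputable def betSet (μ : ℝ) : Set EReal := Set.Icc (betLower μ) (betUpper μ)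

/-- `(1/T) ∑_t log(1 + α (z_t - μ))`, with EReal conventions (`0 * ±∞ = 0`, `log 0 = -∞`). -/
noncomputable def betTerm {T : ℕ} (z : Fin T → ℝ) (μ : ℝ) (α : EReal) : EReal :=
  (((T : ℝ)⁻¹ : ℝ) : EReal) * ∑ t : Fin T, elog (1 + α * ((z t - μ : ℝ) : EReal))

/-- `Ψ(z, μ) = sup_{α ∈ A_μ} (1/T) ∑_t log(1 + α (z_t - μ))`. -/
noncomputable def Psi {T : ℕ} (z : Fin T → ℝ) (μ : ℝ) : EReal :=
  ⨆ α ∈ betSet μ, betTerm z μ α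

/-- `μ_z = (1/T) ∑_t z_t`. -/
noncomputable def muz {T : ℕ} (z : Fin T → ℝ) : ℝ := (T : ℝ)⁻¹ * ∑ t, z t

/-- The upper inverse `Ψ_+^{-1}(z, C) = sup {μ ∈ [0,1] : Ψ(z,μ) ≤ C}`. -/
noncomputable def PsiInvPlus {T : ℕ} (z : Fin T → ℝ) (C : EReal) : ℝ :=
  sSup {μ : ℝ | μ ∈ Set.Icc (0 : ℝ) 1 ∧ Psi z μ ≤ C}

/-- The lower inverse `Ψ_-^{-1}(z, C) = inf {μ ∈ [0,1] : Ψ(z,μ) ≤ C}`. -/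
noncomputable def PsiInvMinus {T : ℕ} (z : Fin T → ℝ) (C : EReal) : ℝ :=
  sInf {μ : ℝ | μ ∈ Set.Icc (0 : ℝ) 1 ∧ Psi z μ ≤ C}

/-- The binary relative entropy `kl(p, q)`, valued in the extended reals, with
`kl(0,q) = log(1/(1-q))`, `kl(1,q) = log(1/q)`, `kl(p,0) = +∞` for `p > 0` and
`kl(p,1) = +∞` for `p < 1`. -/
noncomputable def bkl (p q : ℝ) : EReal :=
  if p = 0 then (if q = 1 then ⊤ else ((Real.log (1 / (1 - q)) : ℝ) : EReal))
  else if p = 1 then (if q = 0 then ⊤ else ((Real.log (1 / q) : ℝ) : EReal))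
  else if q = 0 ∨ q = 1 then ⊤
  else ((p * Real.log (p / q) + (1 - p) * Real.log ((1 - p) / (1 - q)) : ℝ) : EReal)

/-- The upper inverse `kl_+^{-1}(p, C) = sup {q ∈ [0,1] : kl(p,q) ≤ C}`. -/
noncomputable def klInvPlus (p : ℝ) (C : EReal) : ℝ :=
  sSup {q : ℝ | q ∈ Set.Icc (0 : ℝ) 1 ∧ bkl p q ≤ C}

/-- The lower inverse `kl_-^{-1}(p, C) = inf {q ∈ [0,1] : kl(p,q) ≤ C}`. -/
noncomputable def klInvMinus (p : ℝ) (C : EReal) : ℝ :=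
  sInf {q : ℝ | q ∈ Set.Icc (0 : ℝ) 1 ∧ bkl p q ≤ C}

/-! ### Auxiliary lemmas -/

lemma EReal.coe_sum {n : ℕ} (f : Fin n → ℝ) :
    ((∑ i, f i : ℝ) : EReal) = ∑ i, (f i : EReal) :=
  map_sum (⟨⟨Real.toEReal, EReal.coe_zero⟩, EReal.coe_add⟩ : ℝ →+ EReal) f Finset.univ

lemma elog_coe_of_pos {r : ℝ} (hr : 0 < r) :
    elog (r : EReal) = ((Real.log r : ℝ) : EReal) := by
  rw [elog, if_neg (EReal.coe_ne_top r), if_neg (by exact_mod_cast not_le.2 hr), EReal.toReal_coe]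

@[simp] lemma elog_one : elog (1 : EReal) = 0 := by
  rw [show (1 : EReal) = ((1 : ℝ) : EReal) by norm_cast, elog_coe_of_pos one_pos,
    Real.log_one, EReal.coe_zero]

@[simp] lemma elog_top : elog (⊤ : EReal) = ⊤ := by simp [elog]

lemma elog_coe_le_sub_one (r : ℝ) : elog (r : EReal) ≤ ((r - 1 : ℝ) : EReal) := by
  rcases le_or_gt r 0 with h | h
  · rw [elog, if_neg (EReal.coe_ne_top r), if_pos (by exact_mod_cast h)]
    exact bot_le
  · rw [elog_coe_of_pos h, EReal.coe_le_coe_iff]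
    exact Real.log_le_sub_one_of_pos h

/-- For `c ≥ 0` real and `x ≤ 0` in `EReal`, `c * x ≤ 0`. -/
lemma coe_mul_nonpos {c : ℝ} (hc : 0 ≤ c) {x : EReal} (hx : x ≤ 0) : (c : EReal) * x ≤ 0 := by
  induction x using EReal.rec with
  | bot =>
    rcases eq_or_lt_of_le hc with h | h
    · rw [← h]; simp
    · rw [EReal.coe_mul_bot_of_pos h]; exact bot_le
  | coe r =>
    rw [← EReal.coe_mul]
    exact_mod_cast mul_nonpos_of_nonneg_of_nonpos hc (by exact_mod_cast hx)
  | top => exact absurd hx (by simp)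

lemma betTerm_le_Psi {T : ℕ} (z : Fin T → ℝ) (μ : ℝ) {α : EReal} (hα : α ∈ betSet μ) :
    betTerm z μ α ≤ Psi z μ :=
  le_iSup₂ (f := fun α (_ : α ∈ betSet μ) => betTerm z μ α) α hα

lemma betTerm_zero {T : ℕ} (z : Fin T → ℝ) (μ : ℝ) : betTerm z μ 0 = 0 := by
  simp [betTerm]

lemma sum_eq_T_mul_muz {T : ℕ} (hT : 1 ≤ T) (z : Fin T → ℝ) :
    ∑ t, z t = (T : ℝ) * muz z := by
  have hT0 : (T : ℝ) ≠ 0 := by positivity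
  rw [muz]; field_simp

lemma muz_mem_Icc {T : ℕ} (hT : 1 ≤ T) (z : Fin T → ℝ)
    (hz : ∀ t, z t ∈ Set.Icc (0 : ℝ) 1) : muz z ∈ Set.Icc (0 : ℝ) 1 := by
  have hT0 : (0 : ℝ) < T := by positivity
  constructor
  · apply mul_nonneg (by positivity)
    exact Finset.sum_nonneg fun t _ => (hz t).1
  · rw [muz, inv_mul_le_iff₀ hT0, mul_one]
    calc ∑ t, z t ≤ ∑ _t : Fin T, (1 : ℝ) := Finset.sum_le_sum fun t _ => (hz t).2
    _ = T := by simp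

lemma all_zero_of_muz_zero {T : ℕ} (hT : 1 ≤ T) (z : Fin T → ℝ)
    (hz : ∀ t, z t ∈ Set.Icc (0 : ℝ) 1) (h : muz z = 0) : ∀ t, z t = 0 := by
  have hs : ∑ t, z t = 0 := by rw [sum_eq_T_mul_muz hT z, h, mul_zero]
  intro t
  exact (Finset.sum_eq_zero_iff_of_nonneg fun t _ => (hz t).1).1 hs t (Finset.mem_univ t)

lemma all_one_of_muz_one {T : ℕ} (hT : 1 ≤ T) (z : Fin T → ℝ)
    (hz : ∀ t, z t ∈ Set.Icc (0 : ℝ) 1) (h : muz z = 1) : ∀ t, z t = 1 := by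
  have hs : ∑ t, (1 - z t) = 0 := by
    rw [Finset.sum_sub_distrib, sum_eq_T_mul_muz hT z, h, mul_one]
    simp
  intro t
  have := (Finset.sum_eq_zero_iff_of_nonneg fun t _ => sub_nonneg.2 (hz t).2).1 hs t
    (Finset.mem_univ t)
  linarith

/-- Jensen / `log x ≤ x - 1` : the betting sup at the empirical mean is at most 0. -/
lemma psi_muz_nonpos {T : ℕ} (hT : 1 ≤ T) (z : Fin T → ℝ)
    (hz : ∀ t, z t ∈ Set.Icc (0 : ℝ) 1) : Psi z (muz z) ≤ 0 := by
  set p := muz z with hp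
  have hT0 : (0 : ℝ) < T := by positivity
  apply iSup₂_le
  intro α hα
  induction α using EReal.rec with
  | bot =>
    -- then betLower p = ⊥, i.e. p = 1
    have hp1 : p = 1 := by
      by_contra h
      have := hα.1
      rw [betLower, if_neg h, le_bot_iff] at this
      exact EReal.coe_ne_bot _ this
    have hz1 := all_one_of_muz_one hT z hz hp1
    have : ∀ t, elog (1 + (⊥ : EReal) * ((z t - p : ℝ) : EReal)) = 0 := by
      intro t
      rw [hz1 t, hp1]
      norm_num
    rw [betTerm]
    simp only [this, Finset.sum_const, Finset.card_univ, Fintype.card_fin, smul_zero, mul_zero]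
    exact le_refl 0
  | top =>
    have hp0 : p = 0 := by
      by_contra h
      have := hα.2
      rw [betUpper, if_neg h, top_le_iff] at this
      exact EReal.coe_ne_top _ this
    have hz0 := all_zero_of_muz_zero hT z hz hp0
    have : ∀ t, elog (1 + (⊤ : EReal) * ((z t - p : ℝ) : EReal)) = 0 := by
      intro t
      rw [hz0 t, hp0]
      norm_num
    rw [betTerm]
    simp only [this, Finset.sum_const, Finset.card_univ, Fintype.card_fin, smul_zero, mul_zero]
    exact le_refl 0
  | coe a =>
    rw [betTerm]
    apply coe_mul_nonpos (by positivity)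
    have hterm : ∀ t ∈ Finset.univ, elog (1 + (a : EReal) * ((z t - p : ℝ) : EReal))
        ≤ ((a * (z t - p) : ℝ) : EReal) := by
      intro t _
      have h1 : (1 : EReal) + (a : EReal) * ((z t - p : ℝ) : EReal)
          = ((1 + a * (z t - p) : ℝ) : EReal) := by norm_cast
      rw [h1]
      have := elog_coe_le_sub_one (1 + a * (z t - p))
      simpa using this
    calc ∑ t, elog (1 + (a : EReal) * ((z t - p : ℝ) : EReal))
        ≤ ∑ t, ((a * (z t - p) : ℝ) : EReal) := Finset.sum_le_sum hterm
      _ = ((∑ t, a * (z t - p) : ℝ) : EReal) := (EReal.coe_sum _).symm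
      _ = ((0 : ℝ) : EReal) := by
          congr 1
          rw [← Finset.mul_sum, Finset.sum_sub_distrib, sum_eq_T_mul_muz hT z]
          simp [← hp]
      _ = 0 := EReal.coe_zero

/-- Key pointwise concavity bound. -/
lemma log_concave_bound {A B w : ℝ} (hA : 0 < A) (hB : 0 < B) (hw0 : 0 ≤ w) (hw1 : w ≤ 1) :
    w * Real.log A + (1 - w) * Real.log B ≤ Real.log (w * A + (1 - w) * B) := by
  have := (strictConcaveOn_log_Ioi.concaveOn).2 (Set.mem_Ioi.2 hA) (Set.mem_Ioi.2 hB)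
    hw0 (by linarith : (0:ℝ) ≤ 1 - w) (by ring)
  simpa [smul_eq_mul] using this


/-- Pointwise bound used in the interior case. -/
lemma pointwise_bound {p μ w : ℝ} (hμ0 : 0 < μ) (hμ1 : μ < 1) (hw0 : 0 ≤ w) (hw1 : w ≤ 1)
    (hp0 : 0 ≤ p) (hp1 : p ≤ 1) (h0 : p = 0 → w = 0) (h1 : p = 1 → w = 1) :
    0 < w * (p / μ) + (1 - w) * ((1 - p) / (1 - μ)) ∧
    w * Real.log (p / μ) + (1 - w) * Real.log ((1 - p) / (1 - μ)) ≤
      Real.log (w * (p / μ) + (1 - w) * ((1 - p) / (1 - μ))) := by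
  have h1μ : (0:ℝ) < 1 - μ := by linarith
  rcases eq_or_lt_of_le hp0 with hP | hP
  · -- p = 0, w = 0
    have hw := h0 hP.symm
    subst hw
    rw [← hP]
    have hB : (0:ℝ) < (1 - 0) / (1 - μ) := div_pos (by norm_num) h1μ
    constructor
    · nlinarith [hB]
    · norm_num
  rcases eq_or_lt_of_le hp1 with hP1 | hP1
  · -- p = 1, w = 1
    have hw := h1 hP1
    subst hw
    rw [hP1]
    have hA : (0:ℝ) < (1:ℝ) / μ := div_pos one_pos hμ0
    constructor
    · nlinarith [hA]
    · norm_num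
  · -- 0 < p < 1
    have hA : 0 < p / μ := div_pos hP hμ0
    have hB : 0 < (1 - p) / (1 - μ) := div_pos (by linarith) h1μ
    have hpos : 0 < w * (p / μ) + (1 - w) * ((1 - p) / (1 - μ)) := by
      rcases eq_or_lt_of_le hw0 with hW | hW
      · rw [← hW]; norm_num; positivity
      · nlinarith [mul_pos hW hA, mul_nonneg (by linarith : (0:ℝ) ≤ 1 - w) hB.le]
    exact ⟨hpos, log_concave_bound hA hB hw0 hw1⟩

lemma bkl_eq_coe {p μ : ℝ} (hp0 : 0 ≤ p) (hp1 : p ≤ 1) (hμ0 : 0 < μ) (hμ1 : μ < 1) :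
    bkl p μ =
      ((p * Real.log (p / μ) + (1 - p) * Real.log ((1 - p) / (1 - μ)) : ℝ) : EReal) := by
  rcases eq_or_ne p 0 with h | h
  · subst h
    rw [bkl, if_pos rfl, if_neg hμ1.ne]
    norm_num [zero_div]
  rcases eq_or_ne p 1 with h1 | h1
  · subst h1
    rw [bkl, if_neg h, if_pos rfl, if_neg hμ0.ne']
    norm_num [zero_div]
  · rw [bkl, if_neg h, if_neg h1, if_neg (by push_neg; exact ⟨hμ0.ne', hμ1.ne⟩)]

/-- The central comparison: `kl(μ_z, μ) ≤ Ψ(z, μ)` for `μ ∈ [0,1]`. -/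
lemma bkl_le_Psi {T : ℕ} (hT : 1 ≤ T) (z : Fin T → ℝ)
    (hz : ∀ t, z t ∈ Set.Icc (0 : ℝ) 1) {μ : ℝ} (hμ : μ ∈ Set.Icc (0 : ℝ) 1) :
    bkl (muz z) μ ≤ Psi z μ := by
  set p := muz z with hp
  have hT0 : (0 : ℝ) < T := by positivity
  have hpm := muz_mem_Icc hT z hz
  have hp0 : 0 ≤ p := hpm.1
  have hp1 : p ≤ 1 := hpm.2
  rcases eq_or_lt_of_le hμ.1 with hμ0 | hμpos
  · -- μ = 0
    have hμ0 : μ = 0 := hμ0.symm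
    subst hμ0
    rcases eq_or_ne p 0 with hpz | hpz
    · rw [hpz]
      have hb : bkl 0 0 = 0 := by norm_num [bkl]
      rw [hb]
      have h0mem : (0 : EReal) ∈ betSet 0 := by
        refine ⟨?_, ?_⟩
        · rw [betLower, if_neg (by norm_num)]
          exact_mod_cast (by norm_num : (-(1 - (0:ℝ))⁻¹ : ℝ) ≤ 0)
        · rw [betUpper, if_pos rfl]; exact le_top
      calc (0 : EReal) = betTerm z 0 0 := (betTerm_zero z 0).symm
        _ ≤ Psi z 0 := betTerm_le_Psi z 0 h0mem
    · have hbkl : bkl p 0 = ⊤ := by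
        rw [bkl, if_neg hpz]
        rcases eq_or_ne p 1 with h1 | h1
        · rw [if_pos h1, if_pos rfl]
        · rw [if_neg h1, if_pos (Or.inl rfl)]
      rw [hbkl, top_le_iff]
      obtain ⟨t0, ht0⟩ : ∃ t, 0 < z t := by
        by_contra h
        push_neg at h
        have hzz : ∀ t, z t = 0 := fun t => le_antisymm (h t) (hz t).1
        exact hpz (by rw [hp, muz]; simp [hzz])
      have htmem : (⊤ : EReal) ∈ betSet 0 := ⟨le_top, by rw [betUpper, if_pos rfl]⟩
      have hterm : ∀ t, (0 : EReal) ≤ elog (1 + (⊤ : EReal) * ((z t - 0 : ℝ) : EReal)) := by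
        intro t
        rcases eq_or_lt_of_le (hz t).1 with h | h
        · rw [← h]; norm_num
        · rw [sub_zero, EReal.top_mul_coe_of_pos h,
            EReal.add_top_of_ne_bot (by rw [show (1:EReal) = ((1:ℝ):EReal) by norm_cast]; exact EReal.coe_ne_bot 1), elog_top]
          exact le_top
      have hsum : (∑ t, elog (1 + (⊤ : EReal) * ((z t - 0 : ℝ) : EReal))) = ⊤ := by
        apply top_le_iff.1
        calc (⊤ : EReal) = elog (1 + (⊤ : EReal) * ((z t0 - 0 : ℝ) : EReal)) := by
              rw [sub_zero, EReal.top_mul_coe_of_pos ht0,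
                EReal.add_top_of_ne_bot (by rw [show (1:EReal) = ((1:ℝ):EReal) by norm_cast]; exact EReal.coe_ne_bot 1), elog_top]
          _ ≤ _ := Finset.single_le_sum (fun t _ => hterm t) (Finset.mem_univ t0)
      have htop : betTerm z 0 ⊤ = ⊤ := by
        rw [betTerm, hsum, EReal.coe_mul_top_of_pos (by positivity)]
      exact top_le_iff.1 (htop ▸ betTerm_le_Psi z 0 htmem)
  rcases eq_or_lt_of_le hμ.2 with hμ1 | hμ1
  · -- μ = 1
    subst hμ1
    rcases eq_or_ne p 1 with hpz | hpz
    · rw [hpz]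
      have hb : bkl 1 1 = 0 := by norm_num [bkl]
      rw [hb]
      have h0mem : (0 : EReal) ∈ betSet 1 := by
        refine ⟨?_, ?_⟩
        · rw [betLower, if_pos rfl]; exact bot_le
        · rw [betUpper, if_neg (by norm_num)]
          exact_mod_cast (by norm_num : (0:ℝ) ≤ (1:ℝ)⁻¹)
      calc (0 : EReal) = betTerm z 1 0 := (betTerm_zero z 1).symm
        _ ≤ Psi z 1 := betTerm_le_Psi z 1 h0mem
    · have hbkl : bkl p 1 = ⊤ := by
        rcases eq_or_ne p 0 with h | h
        · rw [bkl, if_pos h, if_pos rfl]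
        · rw [bkl, if_neg h, if_neg hpz, if_pos (Or.inr rfl)]
      rw [hbkl, top_le_iff]
      obtain ⟨t0, ht0⟩ : ∃ t, z t < 1 := by
        by_contra h
        push_neg at h
        have hzz : ∀ t, z t = 1 := fun t => le_antisymm (hz t).2 (h t)
        refine hpz ?_
        rw [hp, muz]
        simp only [hzz, Finset.sum_const, Finset.card_univ, Fintype.card_fin, smul_eq_mul,
          nsmul_eq_mul, mul_one]
        field_simp
      have htmem : (⊥ : EReal) ∈ betSet 1 := ⟨by rw [betLower, if_pos rfl], bot_le⟩
      have hterm : ∀ t, (0 : EReal) ≤ elog (1 + (⊥ : EReal) * ((z t - 1 : ℝ) : EReal)) := by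
        intro t
        rcases eq_or_lt_of_le (hz t).2 with h | h
        · rw [h]; norm_num
        · rw [EReal.bot_mul_coe_of_neg (by linarith),
            EReal.add_top_of_ne_bot (by rw [show (1:EReal) = ((1:ℝ):EReal) by norm_cast]; exact EReal.coe_ne_bot 1), elog_top]
          exact le_top
      have hsum : (∑ t, elog (1 + (⊥ : EReal) * ((z t - 1 : ℝ) : EReal))) = ⊤ := by
        apply top_le_iff.1
        calc (⊤ : EReal) = elog (1 + (⊥ : EReal) * ((z t0 - 1 : ℝ) : EReal)) := by
              rw [EReal.bot_mul_coe_of_neg (by linarith),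
                EReal.add_top_of_ne_bot (by rw [show (1:EReal) = ((1:ℝ):EReal) by norm_cast]; exact EReal.coe_ne_bot 1), elog_top]
          _ ≤ _ := Finset.single_le_sum (fun t _ => hterm t) (Finset.mem_univ t0)
      have htop : betTerm z 1 ⊥ = ⊤ := by
        rw [betTerm, hsum, EReal.coe_mul_top_of_pos (by positivity)]
      exact top_le_iff.1 (htop ▸ betTerm_le_Psi z 1 htmem)
  · -- 0 < μ < 1 : use α⋆ = (p - μ)/(μ(1-μ))
    have h1μ : (0:ℝ) < 1 - μ := by linarith
    set a := (p - μ) / (μ * (1 - μ)) with ha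
    have hden : (0:ℝ) < μ * (1 - μ) := mul_pos hμpos h1μ
    have hmem : ((a : ℝ) : EReal) ∈ betSet μ := by
      refine ⟨?_, ?_⟩
      · rw [betLower, if_neg (by linarith)]
        rw [EReal.coe_le_coe_iff, ha, le_div_iff₀ hden]
        have h1 : (1 - μ) * (1 - μ)⁻¹ = 1 := mul_inv_cancel₀ (by linarith)
        nlinarith
      · rw [betUpper, if_neg (by linarith), EReal.coe_le_coe_iff, ha, div_le_iff₀ hden]
        have h1 : μ * μ⁻¹ = 1 := mul_inv_cancel₀ (by linarith)
        nlinarith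
    have hid : ∀ t, 1 + a * (z t - μ)
        = z t * (p / μ) + (1 - z t) * ((1 - p) / (1 - μ)) := by
      intro t
      rw [ha]
      field_simp
      ring
    have hkey : ∀ t, 0 < 1 + a * (z t - μ) ∧
        z t * Real.log (p / μ) + (1 - z t) * Real.log ((1 - p) / (1 - μ)) ≤
          Real.log (1 + a * (z t - μ)) := by
      intro t
      rw [hid t]
      exact pointwise_bound hμpos hμ1 (hz t).1 (hz t).2 hp0 hp1
        (fun h => all_zero_of_muz_zero hT z hz h t)
        (fun h => all_one_of_muz_one hT z hz h t)
    have hbet : betTerm z μ ((a : ℝ) : EReal)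
        = (((T : ℝ)⁻¹ * ∑ t, Real.log (1 + a * (z t - μ)) : ℝ) : EReal) := by
      rw [betTerm, EReal.coe_mul, EReal.coe_sum]
      congr 1
      apply Finset.sum_congr rfl
      intro t _
      have h1 : (1 : EReal) + (a : EReal) * ((z t - μ : ℝ) : EReal)
          = ((1 + a * (z t - μ) : ℝ) : EReal) := by norm_cast
      rw [h1, elog_coe_of_pos (hkey t).1]
    rw [bkl_eq_coe hp0 hp1 hμpos hμ1]
    refine le_trans ?_ (hbet ▸ betTerm_le_Psi z μ hmem)
    rw [EReal.coe_le_coe_iff]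
    have hsum1 : ∑ t, (z t * Real.log (p / μ) + (1 - z t) * Real.log ((1 - p) / (1 - μ)))
        ≤ ∑ t, Real.log (1 + a * (z t - μ)) :=
      Finset.sum_le_sum fun t _ => (hkey t).2
    have hsum2 : ∑ t, (z t * Real.log (p / μ) + (1 - z t) * Real.log ((1 - p) / (1 - μ)))
        = (T : ℝ) * (p * Real.log (p / μ) + (1 - p) * Real.log ((1 - p) / (1 - μ))) := by
      rw [Finset.sum_add_distrib, ← Finset.sum_mul, ← Finset.sum_mul, Finset.sum_sub_distrib,
        Finset.sum_const, Finset.card_univ, Fintype.card_fin, nsmul_eq_mul, mul_one,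
        sum_eq_T_mul_muz hT z, ← hp]
      ring
    have hT0' : (T : ℝ)⁻¹ * ((T : ℝ) * (p * Real.log (p / μ)
        + (1 - p) * Real.log ((1 - p) / (1 - μ))))
        = p * Real.log (p / μ) + (1 - p) * Real.log ((1 - p) / (1 - μ)) := by
      field_simp
    calc p * Real.log (p / μ) + (1 - p) * Real.log ((1 - p) / (1 - μ))
        = (T : ℝ)⁻¹ * ∑ t, (z t * Real.log (p / μ)
            + (1 - z t) * Real.log ((1 - p) / (1 - μ))) := by rw [hsum2, hT0']
      _ ≤ (T : ℝ)⁻¹ * ∑ t, Real.log (1 + a * (z t - μ)) :=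
          mul_le_mul_of_nonneg_left hsum1 (by positivity)

/-- Relaxation of the betting inverses by the kl inverses:
`Ψ_+^{-1}(z, C/T) ≤ kl_+^{-1}(μ_z, C/T)` and `Ψ_-^{-1}(z, C/T) ≥ kl_-^{-1}(μ_z, C/T)`. -/
theorem psiInv_le_klInv {T : ℕ} (hT : 1 ≤ T) (z : Fin T → ℝ)
    (hz : ∀ t, z t ∈ Set.Icc (0 : ℝ) 1) (C : ℝ) (hC : 0 ≤ C) :
    PsiInvPlus z (((C / T : ℝ)) : EReal) ≤ klInvPlus (muz z) (((C / T : ℝ)) : EReal) ∧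
    klInvMinus (muz z) (((C / T : ℝ)) : EReal) ≤ PsiInvMinus z (((C / T : ℝ)) : EReal) := by
  have hpm := muz_mem_Icc hT z hz
  have hCT : (0 : ℝ) ≤ C / T := div_nonneg hC (Nat.cast_nonneg T)
  have hsub : {μ : ℝ | μ ∈ Set.Icc (0 : ℝ) 1 ∧ Psi z μ ≤ ((C / T : ℝ) : EReal)}
      ⊆ {μ : ℝ | μ ∈ Set.Icc (0 : ℝ) 1 ∧ bkl (muz z) μ ≤ ((C / T : ℝ) : EReal)} :=
    fun μ hμ => ⟨hμ.1, le_trans (bkl_le_Psi hT z hz hμ.1) hμ.2⟩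
  have hne : muz z ∈ {μ : ℝ | μ ∈ Set.Icc (0 : ℝ) 1 ∧ Psi z μ ≤ ((C / T : ℝ) : EReal)} :=
    ⟨hpm, le_trans (psi_muz_nonpos hT z hz) (by exact_mod_cast hCT)⟩
  constructor
  · exact csSup_le_csSup ⟨1, fun μ hμ => hμ.1.2⟩ ⟨muz z, hne⟩ hsub
  · exact csInf_le_csInf ⟨0, fun μ hμ => hμ.1.1⟩ ⟨muz z, hne⟩ hsub
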